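/- Let f : ℝ^N → (-∞,∞] be a proper lower-semicontinuous convex function, G symmetric positive definite, and f* its Fenchel conjugate f*(x) = sup_y ⟨x,y⟩ − f(y). Then prox_{G,f*}(x) = x − G^{-1} prox_{G^{-1},f}(Gx). -/

import Mathlib

open scoped RealInnerProductSpace

lemma toEL_symm {N : ℕ} {A : Matrix (Fin N) (Fin N) ℝ} (hA : A.IsHermitian)
    (u w : EuclideanSpace ℝ (Fin N)) :
    ⟪Matrix.toEuclideanLin A u, w⟫ = ⟪u, Matrix.toEuclideanLin A w⟫ :=
  (Matrix.isHermitian_iff_isSymmetric.mp hA) u w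

lemma toEL_pos {N : ℕ} {A : Matrix (Fin N) (Fin N) ℝ} (hA : A.PosDef)
    {c : EuclideanSpace ℝ (Fin N)} (hc : c ≠ 0) :
    0 < ⟪c, Matrix.toEuclideanLin A c⟫ := by
  rw [Matrix.toEuclideanLin_apply, EuclideanSpace.inner_eq_star_dotProduct]
  simpa [dotProduct_comm] using hA.dotProduct_mulVec_pos (x := WithLp.equiv 2 _ c) (by simpa using hc)

lemma toEL_nonneg {N : ℕ} {A : Matrix (Fin N) (Fin N) ℝ} (hA : A.PosDef)
    (c : EuclideanSpace ℝ (Fin N)) :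
    0 ≤ ⟪c, Matrix.toEuclideanLin A c⟫ := by
  by_cases hc : c = 0
  · simp [hc]
  · exact (toEL_pos hA hc).le

lemma toEL_mul {N : ℕ} (A B : Matrix (Fin N) (Fin N) ℝ) (v : EuclideanSpace ℝ (Fin N)) :
    Matrix.toEuclideanLin (A * B) v = Matrix.toEuclideanLin A (Matrix.toEuclideanLin B v) := by
  simp [Matrix.toEuclideanLin_apply, Matrix.mulVec_mulVec]

lemma toEL_one {N : ℕ} (v : EuclideanSpace ℝ (Fin N)) :
    Matrix.toEuclideanLin (1 : Matrix (Fin N) (Fin N) ℝ) v = v := by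
  simp [Matrix.toEuclideanLin_apply]

set_option maxHeartbeats 800000 in
theorem stmt11 {N : ℕ} (f : EuclideanSpace ℝ (Fin N) → EReal)
    (hproper : ∃ x, f x ≠ ⊤) (hnebot : ∀ x, f x ≠ ⊥)
    (hlsc : LowerSemicontinuous f)
    (hconv : ∀ (x y : EuclideanSpace ℝ (Fin N)) (θ : ℝ), 0 ≤ θ → θ ≤ 1 →
      f (θ • x + (1 - θ) • y) ≤ (θ : EReal) * f x + ((1 - θ : ℝ) : EReal) * f y)
    (G : Matrix (Fin N) (Fin N) ℝ) (hG : G.PosDef)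
    (fstar : EuclideanSpace ℝ (Fin N) → EReal)
    (hfstar : ∀ u, fstar u = ⨆ y, ((⟪u, y⟫ : ℝ) : EReal) - f y)
    (x p q : EuclideanSpace ℝ (Fin N))
    -- p = prox_{G,f*}(x) :
    (hp : ∀ z,
      (((1 / 2 : ℝ) * ⟪x - p, Matrix.toEuclideanLin G (x - p)⟫ : ℝ) : EReal) + fstar p ≤
        (((1 / 2 : ℝ) * ⟪x - z, Matrix.toEuclideanLin G (x - z)⟫ : ℝ) : EReal) + fstar z)
    -- q = prox_{G⁻¹,f}(G x) :
    (hq : ∀ z,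
      (((1 / 2 : ℝ) * ⟪Matrix.toEuclideanLin G x - q,
          Matrix.toEuclideanLin G⁻¹ (Matrix.toEuclideanLin G x - q)⟫ : ℝ) : EReal) + f q ≤
        (((1 / 2 : ℝ) * ⟪Matrix.toEuclideanLin G x - z,
          Matrix.toEuclideanLin G⁻¹ (Matrix.toEuclideanLin G x - z)⟫ : ℝ) : EReal) + f z) :
    p = x - Matrix.toEuclideanLin G⁻¹ q := by
  classical
  have hGi : (G⁻¹).PosDef := hG.inv
  set A : EuclideanSpace ℝ (Fin N) →ₗ[ℝ] EuclideanSpace ℝ (Fin N) :=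
    Matrix.toEuclideanLin G with hAdef
  set B : EuclideanSpace ℝ (Fin N) →ₗ[ℝ] EuclideanSpace ℝ (Fin N) :=
    Matrix.toEuclideanLin G⁻¹ with hBdef
  have hsymA : ∀ u w : EuclideanSpace ℝ (Fin N), ⟪A u, w⟫ = ⟪u, A w⟫ :=
    toEL_symm hG.isHermitian
  have hsymB : ∀ u w : EuclideanSpace ℝ (Fin N), ⟪B u, w⟫ = ⟪u, B w⟫ :=
    toEL_symm hGi.isHermitian
  have hdet : IsUnit G.det := hG.det_pos.ne'.isUnit
  have hinvmul : G⁻¹ * G = 1 := Matrix.nonsing_inv_mul G hdet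
  have hmulinv : G * G⁻¹ = 1 := Matrix.mul_nonsing_inv G hdet
  have hBA : ∀ u, B (A u) = u := by
    intro u
    show Matrix.toEuclideanLin G⁻¹ (Matrix.toEuclideanLin G u) = u
    rw [← toEL_mul, hinvmul, toEL_one]
  have hAB : ∀ u, A (B u) = u := by
    intro u
    show Matrix.toEuclideanLin G (Matrix.toEuclideanLin G⁻¹ u) = u
    rw [← toEL_mul, hmulinv, toEL_one]
  set v : EuclideanSpace ℝ (Fin N) := x - B q with hvdef
  have hxv : x - v = B q := by rw [hvdef]; abel
  -- f q is a real number
  obtain ⟨x₀, hx₀⟩ := hproper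
  have hfq_ne_top : f q ≠ ⊤ := by
    intro htop
    have h := hq x₀
    rw [htop, EReal.add_top_of_ne_bot (EReal.coe_ne_bot _)] at h
    have hx₀r : f x₀ = ((f x₀).toReal : EReal) := (EReal.coe_toReal hx₀ (hnebot x₀)).symm
    rw [hx₀r, ← EReal.coe_add, top_le_iff] at h
    exact (EReal.coe_ne_top _) h
  set r : ℝ := (f q).toReal with hrdef
  have hr : f q = (r : EReal) := (EReal.coe_toReal hfq_ne_top (hnebot q)).symm
  set d : EuclideanSpace ℝ (Fin N) := A x - q with hddef
  have hBd : B d = v := by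
    rw [hddef, map_sub, hvdef, hBA x]
  -- subgradient inequality : ∀ w, r + ⟪v, w - q⟫ ≤ f w
  have hsub : ∀ w : EuclideanSpace ℝ (Fin N), ((r + ⟪v, w - q⟫ : ℝ) : EReal) ≤ f w := by
    intro w
    by_cases hfw : f w = ⊤
    · rw [hfw]; exact le_top
    have hs : f w = (((f w).toReal : ℝ) : EReal) := (EReal.coe_toReal hfw (hnebot w)).symm
    set s : ℝ := (f w).toReal with hsdef
    set e : EuclideanSpace ℝ (Fin N) := w - q with hedef
    set c : ℝ := ⟪v, e⟫ with hcdef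
    set M : ℝ := ⟪e, B e⟫ with hMdef
    have hM0 : 0 ≤ M := toEL_nonneg hGi e
    have key : ∀ t : ℝ, 0 < t → t ≤ 1 → r + c ≤ s + (t / 2) * M := by
      intro t ht0 ht1
      have hz : q + t • e = t • w + (1 - t) • q := by
        rw [hedef]; module
      have hdz : A x - (q + t • e) = d - t • e := by
        rw [hddef]; abel
      have h1 := hq (q + t • e)
      rw [hdz, hr] at h1
      have hquad : ⟪d - t • e, B (d - t • e)⟫ = ⟪d, B d⟫ - 2 * t * c + t ^ 2 * M := by
        rw [map_sub, map_smul, inner_sub_left, inner_sub_right, inner_sub_right,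
          real_inner_smul_left, real_inner_smul_left, real_inner_smul_right,
          real_inner_smul_right]
        have h2 : ⟪d, B e⟫ = c := by rw [← hsymB d e, hBd, hcdef]
        have h3 : ⟪e, B d⟫ = c := by rw [hBd, hcdef, real_inner_comm]
        rw [h2, h3]; ring
      have h4 : f (q + t • e) ≤ ((t * s + (1 - t) * r : ℝ) : EReal) := by
        rw [hz]
        calc f (t • w + (1 - t) • q) ≤ (t : EReal) * f w + ((1 - t : ℝ) : EReal) * f q :=
              hconv w q t ht0.le ht1
          _ = ((t * s + (1 - t) * r : ℝ) : EReal) := by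
              rw [hs, hr, ← EReal.coe_mul, ← EReal.coe_mul, ← EReal.coe_add]
      have h5 : (((1 / 2 : ℝ) * ⟪d, B d⟫ + r : ℝ) : EReal) ≤
          (((1 / 2 : ℝ) * ⟪d - t • e, B (d - t • e)⟫ + (t * s + (1 - t) * r) : ℝ) : EReal) := by
        rw [EReal.coe_add, EReal.coe_add]
        calc (((1 / 2 : ℝ) * ⟪d, B d⟫ : ℝ) : EReal) + (r : EReal)
            ≤ (((1 / 2 : ℝ) * ⟪d - t • e, B (d - t • e)⟫ : ℝ) : EReal) + f (q + t • e) := h1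
          _ ≤ _ := add_le_add le_rfl h4
      rw [EReal.coe_le_coe_iff, hquad] at h5
      have h6 : t * (r + c) ≤ t * (s + t / 2 * M) := by nlinarith [h5]
      exact le_of_mul_le_mul_left h6 ht0
    -- take t → 0
    have hrc : r + c ≤ s := by
      by_contra hcon
      push_neg at hcon
      set δ : ℝ := r + c - s with hδdef
      have hδ0 : 0 < δ := by rw [hδdef]; linarith
      set t : ℝ := min 1 (δ / (M + 1)) with htdef
      have ht0 : 0 < t := lt_min one_pos (div_pos hδ0 (by linarith))
      have ht1 : t ≤ 1 := min_le_left _ _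
      have h7 := key t ht0 ht1
      have hM1 : (0:ℝ) < M + 1 := by linarith
      have h8 : t ≤ δ / (M + 1) := min_le_right _ _
      have h8' : t * (M + 1) ≤ δ := by
        rw [← le_div_iff₀ hM1]; exact h8
      have h9 : (t / 2) * M < δ := by
        nlinarith [mul_nonneg ht0.le hM0]
      rw [hδdef] at h9
      linarith
    rw [hs]
    exact EReal.coe_le_coe_iff.mpr hrc
  -- fstar v ≤ ⟪v, q⟫ - r
  have hfv : fstar v ≤ ((⟪v, q⟫ - r : ℝ) : EReal) := by
    rw [hfstar v]
    apply iSup_le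
    intro w
    by_cases hfw : f w = ⊤
    · rw [hfw, EReal.sub_top]; exact bot_le
    have hs : f w = (((f w).toReal : ℝ) : EReal) := (EReal.coe_toReal hfw (hnebot w)).symm
    rw [hs, ← EReal.coe_sub, EReal.coe_le_coe_iff]
    have h1 := hsub w
    rw [hs, EReal.coe_le_coe_iff, inner_sub_right] at h1
    linarith
  -- fstar p ≥ ⟪p, q⟫ - r
  have hfp : ((⟪p, q⟫ - r : ℝ) : EReal) ≤ fstar p := by
    rw [hfstar p]
    refine le_iSup_of_le q (le_of_eq ?_)
    rw [hr, ← EReal.coe_sub]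
  -- combine with hp v
  have hchain : (((1 / 2 : ℝ) * ⟪x - p, A (x - p)⟫ + (⟪p, q⟫ - r) : ℝ) : EReal) ≤
      (((1 / 2 : ℝ) * ⟪B q, A (B q)⟫ + (⟪v, q⟫ - r) : ℝ) : EReal) := by
    rw [EReal.coe_add, EReal.coe_add]
    calc (((1 / 2 : ℝ) * ⟪x - p, A (x - p)⟫ : ℝ) : EReal) + ((⟪p, q⟫ - r : ℝ) : EReal)
        ≤ (((1 / 2 : ℝ) * ⟪x - p, A (x - p)⟫ : ℝ) : EReal) + fstar p := add_le_add le_rfl hfp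
      _ ≤ (((1 / 2 : ℝ) * ⟪x - v, A (x - v)⟫ : ℝ) : EReal) + fstar v := hp v
      _ = (((1 / 2 : ℝ) * ⟪B q, A (B q)⟫ : ℝ) : EReal) + fstar v := by rw [hxv]
      _ ≤ _ := add_le_add le_rfl hfv
  rw [EReal.coe_le_coe_iff] at hchain
  -- final linear algebra
  set a : EuclideanSpace ℝ (Fin N) := x - p with hadef
  set b : EuclideanSpace ℝ (Fin N) := B q with hbdef
  have hAb : A b = q := hAB q
  have hvq : ⟪v, q⟫ = ⟪x, q⟫ - ⟪b, q⟫ := by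
    rw [hvdef, inner_sub_left]
  have hpq : ⟪p, q⟫ = ⟪x, q⟫ - ⟪a, q⟫ := by
    have : p = x - a := by rw [hadef]; abel
    rw [this, inner_sub_left]
  have haq : ⟪a, q⟫ = ⟪a, A b⟫ := by rw [hAb]
  have hbq : ⟪b, q⟫ = ⟪b, A b⟫ := by rw [hAb]
  have hfinal : ⟪a - b, A (a - b)⟫ ≤ 0 := by
    have hexp : ⟪a - b, A (a - b)⟫ = ⟪a, A a⟫ - ⟪a, A b⟫ - ⟪b, A a⟫ + ⟪b, A b⟫ := by
      rw [map_sub, inner_sub_left, inner_sub_right, inner_sub_right]; ring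
    have hcomm : ⟪b, A a⟫ = ⟪a, A b⟫ := by
      rw [← hsymA a b, real_inner_comm]
    rw [hexp, hcomm]
    linarith [hchain, hpq, hvq, haq, hbq]
  have hab : a - b = 0 := by
    by_contra hne
    exact absurd hfinal (not_le.mpr (toEL_pos hG hne))
  have : a = b := sub_eq_zero.mp hab
  rw [hadef, hbdef] at this
  have : p = x - B q := by
    have h := this
    rw [sub_eq_iff_eq_add] at h
    rw [h]; abel
  exact this
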